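/- Let p be an odd prime. Then the number of orbits of Γ₀(p²)^± acting on the projective line ℙ¹(ℚ) equals (p + 3)/2. -/

import Mathlib

/-- The projective line `ℙ¹(ℚ)`: the set of `1`-dimensional `ℚ`-subspaces of `ℚ²`. -/
def ProjLineQ : Type := {L : Submodule ℚ (Fin 2 → ℚ) // Module.finrank ℚ L = 1}

/-- The orbit relation on `ℙ¹(ℚ)` for the group `Γ₀(M)^±` of integer matrices of
determinant `±1` whose `(2,1)` entry is divisible by `M`. -/
def relGamma0PM (M : ℕ) (L L' : ProjLineQ) : Prop :=
  ∃ g : Matrix (Fin 2) (Fin 2) ℤ, (g.det = 1 ∨ g.det = -1) ∧ (M : ℤ) ∣ g 1 0 ∧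
    Submodule.map (Matrix.mulVecLin (g.map ((↑) : ℤ → ℚ))) L.1 = L'.1

namespace Aux13

open Matrix Submodule

/-- Cast an integer vector to a rational vector. -/
def cv (v : Fin 2 → ℤ) : Fin 2 → ℚ := fun i => (v i : ℚ)

/-- Primitive integer vector. -/
def Prim (v : Fin 2 → ℤ) : Prop := IsCoprime (v 0) (v 1)

lemma cv_neg (v : Fin 2 → ℤ) : cv (-v) = -cv v := funext fun i => by simp [cv]

lemma cv_ne_zero {v : Fin 2 → ℤ} (h : v ≠ 0) : cv v ≠ 0 := by
  intro hc
  apply h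
  funext i
  have : cv v i = 0 := by rw [hc]; rfl
  simpa [cv] using this

lemma Prim.ne_zero {v : Fin 2 → ℤ} (h : Prim v) : v ≠ 0 := by
  rintro rfl
  simpa using (isCoprime_zero_left.mp h)

lemma cast_mulVec (g : Matrix (Fin 2) (Fin 2) ℤ) (v : Fin 2 → ℤ) :
    (g.map ((↑) : ℤ → ℚ)).mulVec (cv v) = cv (g.mulVec v) := by
  funext i
  have := (RingHom.map_mulVec (Int.castRingHom ℚ) g v i).symm
  simpa [cv, Function.comp] using this

lemma exists_prim (L : ProjLineQ) :
    ∃ v : Fin 2 → ℤ, Prim v ∧ L.1 = Submodule.span ℚ {cv v} := by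
  have hrank : Module.rank ℚ L.1 = 1 := by
    rw [Module.rank_eq_one_iff_finrank_eq_one]; exact L.2
  obtain ⟨v₀, hmem, hne, hle⟩ := (rank_submodule_eq_one_iff L.1).mp hrank
  have hspan : L.1 = Submodule.span ℚ {v₀} := by
    refine le_antisymm hle ?_
    rw [Submodule.span_le, Set.singleton_subset_iff]; exact hmem
  -- clear denominators
  set w : Fin 2 → ℤ := ![ (v₀ 0).num * (v₀ 1).den, (v₀ 1).num * (v₀ 0).den ] with hw
  have hden0 : ((v₀ 0).den : ℚ) ≠ 0 := Nat.cast_ne_zero.mpr (v₀ 0).den_nz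
  have hden1 : ((v₀ 1).den : ℚ) ≠ 0 := Nat.cast_ne_zero.mpr (v₀ 1).den_nz
  have h0 := Rat.num_div_den (v₀ 0)
  have h1 := Rat.num_div_den (v₀ 1)
  rw [div_eq_iff hden0] at h0
  rw [div_eq_iff hden1] at h1
  set d : ℚ := ((v₀ 0).den : ℚ) * ((v₀ 1).den : ℚ) with hd
  have hdne : d ≠ 0 := mul_ne_zero hden0 hden1
  have hcvw : cv w = d • v₀ := by
    funext i
    fin_cases i
    · show ((w 0 : ℤ) : ℚ) = d * v₀ 0
      simp only [hw, Matrix.cons_val_zero]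
      push_cast
      rw [h0, hd]; ring
    · show ((w 1 : ℤ) : ℚ) = d * v₀ 1
      simp only [hw, Matrix.cons_val_one, Matrix.head_cons]
      push_cast
      rw [h1, hd]; ring
  have hwne : w ≠ 0 := by
    intro hw0
    apply hne
    have : cv w = 0 := by rw [hw0]; funext i; simp [cv]
    rw [hcvw] at this
    rcases smul_eq_zero.mp this with h | h
    · exact absurd h hdne
    · exact h
  have hg : 0 < Int.gcd (w 0) (w 1) := by
    refine Int.gcd_pos_iff.mpr ?_
    by_contra hcon
    push_neg at hcon
    apply hwne
    funext i
    fin_cases i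
    · exact hcon.1
    · exact hcon.2
  set g : ℤ := (Int.gcd (w 0) (w 1) : ℤ) with hgdef
  have hgne : (g : ℚ) ≠ 0 := by
    simp only [hgdef]
    exact_mod_cast Nat.cast_ne_zero.mpr hg.ne'
  set u : Fin 2 → ℤ := fun i => w i / g with hu
  have hprim : Prim u := by
    unfold Prim
    rw [Int.isCoprime_iff_gcd_eq_one]
    exact Int.gcd_div_gcd_div_gcd hg
  have hweq : ∀ i, w i = g * u i := by
    intro i
    fin_cases i
    · exact (Int.mul_ediv_cancel' (Int.gcd_dvd_left _ _)).symm
    · exact (Int.mul_ediv_cancel' (Int.gcd_dvd_right _ _)).symm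
  have hcvwu : cv w = (g : ℚ) • cv u := by
    funext i
    have := hweq i
    show ((w i : ℤ) : ℚ) = (g : ℚ) * (u i : ℚ)
    rw [this]; push_cast; ring
  refine ⟨u, hprim, ?_⟩
  rw [hspan]
  have e1 : Submodule.span ℚ {cv w} = Submodule.span ℚ {v₀} := by
    rw [hcvw]
    exact Submodule.span_singleton_smul_eq (IsUnit.mk0 d hdne) v₀
  have e2 : Submodule.span ℚ {cv w} = Submodule.span ℚ {cv u} := by
    rw [hcvwu]
    exact Submodule.span_singleton_smul_eq (IsUnit.mk0 _ hgne) (cv u)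
  rw [← e1, e2]

lemma prim_span_eq {v w : Fin 2 → ℤ} (hv : Prim v) (hw : Prim w)
    (h : Submodule.span ℚ {cv v} = Submodule.span ℚ {cv w}) : v = w ∨ v = -w := by
  have hv0 : cv v ∈ Submodule.span ℚ {cv w} := by
    rw [← h]; exact Submodule.mem_span_singleton_self (cv v)
  obtain ⟨q, hq⟩ := Submodule.mem_span_singleton.mp hv0
  set m : ℤ := q.num with hm
  set n : ℤ := (q.den : ℤ) with hn
  have hdenne : ((q.den : ℚ)) ≠ 0 := Nat.cast_ne_zero.mpr q.den_nz
  have hqn : (m : ℚ) = q * n := by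
    have := Rat.num_div_den q
    rw [div_eq_iff hdenne] at this
    exact_mod_cast this
  have key : ∀ i, m * w i = n * v i := by
    intro i
    have h1 : q * (w i : ℚ) = (v i : ℚ) := by
      have := congrFun hq i
      simpa [cv, Pi.smul_apply, smul_eq_mul] using this
    have : ((m * w i : ℤ) : ℚ) = ((n * v i : ℤ) : ℚ) := by
      push_cast
      rw [hqn, ← h1]; ring
    exact_mod_cast this
  have hcop : IsCoprime m n := by
    rw [Int.isCoprime_iff_gcd_eq_one]
    have : Int.gcd m n = Nat.gcd q.num.natAbs q.den := by
      simp [Int.gcd, hm, hn]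
    rw [this]
    exact q.reduced
  have hndvd : ∀ i, n ∣ w i := by
    intro i
    refine (hcop.symm.dvd_of_dvd_mul_left ?_)
    exact ⟨v i, key i⟩
  have hnunit : IsUnit n := hw.isUnit_of_dvd' (hndvd 0) (hndvd 1)
  have hn1 : n = 1 := by
    rcases Int.isUnit_iff.mp hnunit with h | h
    · exact h
    · exfalso
      have : (0:ℤ) < n := by rw [hn]; exact_mod_cast q.pos
      omega
  have key' : ∀ i, m * w i = v i := by
    intro i
    have := key i
    rw [hn1, one_mul] at this
    exact this
  have hmunit : IsUnit m := by
    apply hv.isUnit_of_dvd' <;> [exact ⟨w 0, (key' 0).symm⟩; exact ⟨w 1, (key' 1).symm⟩]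
  rcases Int.isUnit_iff.mp hmunit with h | h
  · left
    funext i
    have := key' i
    rw [h, one_mul] at this
    exact this.symm
  · right
    funext i
    have := key' i
    rw [h] at this
    simp only [Pi.neg_apply]
    omega

lemma Prim.mulVec {g : Matrix (Fin 2) (Fin 2) ℤ} (hdet : g.det = 1 ∨ g.det = -1)
    {v : Fin 2 → ℤ} (hv : Prim v) : Prim (g.mulVec v) := by
  obtain ⟨x, y, hxy⟩ := hv
  have hu0 : g.mulVec v 0 = g 0 0 * v 0 + g 0 1 * v 1 := by
    simp [Matrix.mulVec, dotProduct, Fin.sum_univ_two]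
  have hu1 : g.mulVec v 1 = g 1 0 * v 0 + g 1 1 * v 1 := by
    simp [Matrix.mulVec, dotProduct, Fin.sum_univ_two]
  have hdet2 : g.det = g 0 0 * g 1 1 - g 0 1 * g 1 0 := Matrix.det_fin_two g
  rcases hdet with hd | hd
  · rw [hdet2] at hd
    exact ⟨x * g 1 1 - y * g 1 0, y * g 0 0 - x * g 0 1, by
      rw [hu0, hu1]
      linear_combination (g 0 0 * g 1 1 - g 0 1 * g 1 0) * hxy + hd⟩
  · rw [hdet2] at hd
    exact ⟨-(x * g 1 1 - y * g 1 0), -(y * g 0 0 - x * g 0 1), by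
      rw [hu0, hu1]
      linear_combination (-(g 0 0 * g 1 1 - g 0 1 * g 1 0)) * hxy - hd⟩

/-- The orbit invariant of a primitive vector. -/
def inv (p : ℕ) (v : Fin 2 → ℤ) : Option (ZMod p) :=
  if (p : ℤ) ∣ v 1 then some (((v 0 * (v 1 / p) : ℤ) : ZMod p) ^ 2) else none

lemma inv_neg (p : ℕ) (v : Fin 2 → ℤ) : inv p (-v) = inv p v := by
  have hneg : (-v) 1 = -(v 1) := rfl
  have hneg0 : (-v) 0 = -(v 0) := rfl
  by_cases h : (p : ℤ) ∣ v 1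
  · have h' : (p : ℤ) ∣ (-v) 1 := by rw [hneg]; exact dvd_neg.mpr h
    rw [inv, inv, if_pos h, if_pos h', hneg, hneg0]
    congr 1
    have : -v 1 / (p : ℤ) = -(v 1 / (p : ℤ)) := Int.neg_ediv_of_dvd h
    rw [this]
    push_cast
    ring
  · have h' : ¬ (p : ℤ) ∣ (-v) 1 := by rw [hneg]; exact fun hc => h (dvd_neg.mp hc)
    rw [inv, inv, if_neg h, if_neg h']

lemma inv_mulVec {p : ℕ} (hp : p.Prime) {g : Matrix (Fin 2) (Fin 2) ℤ}
    (hdet : g.det = 1 ∨ g.det = -1) (hg : (p : ℤ) ^ 2 ∣ g 1 0)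
    {v : Fin 2 → ℤ} (hv : Prim v) : inv p (g.mulVec v) = inv p v := by
  haveI := Fact.mk hp
  have hpI : Prime (p : ℤ) := Nat.prime_iff_prime_int.mp hp
  obtain ⟨t, ht⟩ := hg
  have hu0 : g.mulVec v 0 = g 0 0 * v 0 + g 0 1 * v 1 := by
    simp [Matrix.mulVec, dotProduct, Fin.sum_univ_two]
  have hu1 : g.mulVec v 1 = g 1 0 * v 0 + g 1 1 * v 1 := by
    simp [Matrix.mulVec, dotProduct, Fin.sum_univ_two]
  have hdet2 : g 0 0 * g 1 1 - g 0 1 * g 1 0 = g.det := (Matrix.det_fin_two g).symm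
  have hpz : ((p : ℕ) : ZMod p) = 0 := ZMod.natCast_self p
  by_cases hpc : (p : ℤ) ∣ v 1
  · obtain ⟨c₁, hc⟩ := hpc
    have hpc : (p : ℤ) ∣ v 1 := ⟨c₁, hc⟩
    have hpu : (p : ℤ) ∣ g.mulVec v 1 := by
      rw [hu1, ht, hc]
      exact ⟨(p : ℤ) * t * v 0 + g 1 1 * c₁, by ring⟩
    rw [inv, inv, if_pos hpu, if_pos hpc]
    congr 1
    have hc₁ : v 1 / (p : ℤ) = c₁ := by
      rw [hc]; exact Int.mul_ediv_cancel_left c₁ (by exact_mod_cast hp.ne_zero)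
    have hu1p : g.mulVec v 1 / (p : ℤ) = (p : ℤ) * t * v 0 + g 1 1 * c₁ := by
      rw [hu1, ht, hc]
      have : (p : ℤ) ^ 2 * t * v 0 + g 1 1 * ((p : ℤ) * c₁)
          = (p : ℤ) * ((p : ℤ) * t * v 0 + g 1 1 * c₁) := by ring
      rw [this]
      exact Int.mul_ediv_cancel_left _ (by exact_mod_cast hp.ne_zero)
    rw [hu1p, hu0, hc₁, hc]
    -- now a computation in ZMod p
    have hAD : ((g 0 0 : ℤ) : ZMod p) * ((g 1 1 : ℤ) : ZMod p) = ((g.det : ℤ) : ZMod p) := by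
      have h' : ((g 0 0 * g 1 1 - g 0 1 * g 1 0 : ℤ) : ZMod p) = ((g.det : ℤ) : ZMod p) := by
        rw [hdet2]
      rw [ht] at h'
      simp only [Int.cast_sub, Int.cast_mul, Int.cast_pow, Int.cast_natCast] at h'
      rw [hpz] at h'
      linear_combination h'
    rcases hdet with hd | hd
    · rw [hd] at hAD; push_cast at hAD
      push_cast
      rw [hpz]
      linear_combination (((g 0 0 : ℤ) : ZMod p) * ((g 1 1 : ℤ) : ZMod p) + 1) *
        (((v 0 : ℤ) : ZMod p) * ((c₁ : ℤ) : ZMod p))^2 * hAD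
    · rw [hd] at hAD; push_cast at hAD
      push_cast
      rw [hpz]
      linear_combination (((g 0 0 : ℤ) : ZMod p) * ((g 1 1 : ℤ) : ZMod p) - 1) *
        (((v 0 : ℤ) : ZMod p) * ((c₁ : ℤ) : ZMod p))^2 * hAD
  · have hpu : ¬ (p : ℤ) ∣ g.mulVec v 1 := by
      intro hdvd
      have hpγ : (p : ℤ) ∣ g 1 0 := by rw [ht]; exact ⟨(p : ℤ) * t, by ring⟩
      have h1 : (p : ℤ) ∣ g 1 1 * v 1 := by
        have : g 1 1 * v 1 = g.mulVec v 1 - g 1 0 * v 0 := by rw [hu1]; ring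
        rw [this]
        exact dvd_sub hdvd (hpγ.mul_right _)
      rcases hpI.dvd_mul.mp h1 with h | h
      · -- p ∣ g 1 1 : contradiction with det = ±1
        have hddet : (p : ℤ) ∣ g.det := by
          rw [← hdet2]
          exact dvd_sub (h.mul_left _) ((hpγ.mul_left _))
        rcases hdet with hd | hd <;> rw [hd] at hddet
        · exact hpI.not_dvd_one hddet
        · exact hpI.not_dvd_one (dvd_neg.mp hddet)
      · exact hpc h
    rw [inv, inv, if_neg hpu, if_neg hpc]

/-- Construct an element of `Γ₀`-type sending `v` to `w`, with prescribed lower-left entry. -/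
lemma build {v w : Fin 2 → ℤ} (b d b' d' t ε : ℤ)
    (had : v 0 * d - b * v 1 = 1) (had' : w 0 * d' - b' * w 1 = 1) (hε : ε = 1 ∨ ε = -1) :
    ∃ g : Matrix (Fin 2) (Fin 2) ℤ, (g.det = 1 ∨ g.det = -1) ∧
      g 1 0 = w 1 * d - ε * v 1 * d' - v 1 * w 1 * t ∧ g.mulVec v = w := by
  refine ⟨!![w 0 * d - (w 0 * t + b' * ε) * v 1, -(w 0 * b) + (w 0 * t + b' * ε) * v 0;
             w 1 * d - (w 1 * t + d' * ε) * v 1, -(w 1 * b) + (w 1 * t + d' * ε) * v 0],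
    ?_, ?_, ?_⟩
  · rw [Matrix.det_fin_two_of]
    rcases hε with rfl | rfl
    · left
      linear_combination (v 0 * d - b * v 1) * had' + had
    · right
      linear_combination (-(v 0 * d - b * v 1)) * had' - had
  · show w 1 * d - (w 1 * t + d' * ε) * v 1 = _
    ring
  · funext i
    fin_cases i
    · simp [Matrix.mulVec, dotProduct, Fin.sum_univ_two, Matrix.vecHead, Matrix.vecTail]
      linear_combination w 0 * had
    · simp [Matrix.mulVec, dotProduct, Fin.sum_univ_two, Matrix.vecHead, Matrix.vecTail]
      linear_combination w 1 * had

lemma exists_g {p : ℕ} (hp : p.Prime) {v w : Fin 2 → ℤ} (hv : Prim v) (hw : Prim w)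
    (h : inv p v = inv p w) :
    ∃ g : Matrix (Fin 2) (Fin 2) ℤ, (g.det = 1 ∨ g.det = -1) ∧ (p : ℤ) ^ 2 ∣ g 1 0 ∧
      g.mulVec v = w := by
  haveI := Fact.mk hp
  have hpI : Prime (p : ℤ) := Nat.prime_iff_prime_int.mp hp
  obtain ⟨x, y, hxy⟩ := hv
  obtain ⟨x', y', hxy'⟩ := hw
  have had : v 0 * x - (-y) * v 1 = 1 := by linear_combination hxy
  have had' : w 0 * x' - (-y') * w 1 = 1 := by linear_combination hxy'
  by_cases hpc : (p : ℤ) ∣ v 1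
  · by_cases hpc' : (p : ℤ) ∣ w 1
    · have hsq := h
      simp only [inv, if_pos hpc, if_pos hpc', Option.some.injEq] at hsq
      obtain ⟨c₁, hc⟩ := hpc
      obtain ⟨c₁', hc'⟩ := hpc'
      have hpne : (p : ℤ) ≠ 0 := by exact_mod_cast hp.ne_zero
      have hc₁ : v 1 / (p : ℤ) = c₁ := by rw [hc]; exact Int.mul_ediv_cancel_left _ hpne
      have hc₁' : w 1 / (p : ℤ) = c₁' := by rw [hc']; exact Int.mul_ediv_cancel_left _ hpne
      rw [hc₁, hc₁'] at hsq
      have hpa : ¬ (p : ℤ) ∣ v 0 := by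
        intro hdvd
        refine hpI.not_dvd_one ?_
        rw [← hxy]
        exact dvd_add (hdvd.mul_left x) (Dvd.dvd.mul_left ⟨c₁, hc⟩ y)
      have hpa' : ¬ (p : ℤ) ∣ w 0 := by
        intro hdvd
        refine hpI.not_dvd_one ?_
        rw [← hxy']
        exact dvd_add (hdvd.mul_left x') (Dvd.dvd.mul_left ⟨c₁', hc'⟩ y')
      by_cases hpc₁ : (p : ℤ) ∣ c₁
      · -- p² ∣ v 1 and p² ∣ w 1
        have hz : ((v 0 * c₁ : ℤ) : ZMod p) = 0 := by
          rw [ZMod.intCast_zmod_eq_zero_iff_dvd]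
          exact hpc₁.mul_left _
        have hz' : ((w 0 * c₁' : ℤ) : ZMod p) = 0 := by
          have h2 : ((w 0 * c₁' : ℤ) : ZMod p) ^ 2 = 0 := by rw [← hsq, hz]; ring
          exact pow_eq_zero_iff two_ne_zero |>.mp h2
        have hpc₁' : (p : ℤ) ∣ c₁' := by
          rw [ZMod.intCast_zmod_eq_zero_iff_dvd] at hz'
          rcases hpI.dvd_mul.mp hz' with h' | h'
          · exact absurd h' hpa'
          · exact h'
        obtain ⟨gmat, hdet, h10, hmv⟩ := build (-y) x (-y') x' 0 1 had had' (Or.inl rfl)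
        refine ⟨gmat, hdet, ?_, hmv⟩
        rw [h10, hc, hc']
        obtain ⟨s, hs⟩ := hpc₁
        obtain ⟨s', hs'⟩ := hpc₁'
        exact ⟨s' * x - s * x', by rw [hs, hs']; ring⟩
      · have hfac : (((v 0 * c₁ : ℤ) : ZMod p) - ((w 0 * c₁' : ℤ) : ZMod p)) *
            (((v 0 * c₁ : ℤ) : ZMod p) + ((w 0 * c₁' : ℤ) : ZMod p)) = 0 := by
          linear_combination hsq
        rcases mul_eq_zero.mp hfac with hcase | hcase
        · -- plus case
          have hdvd : (p : ℤ) ∣ (v 0 * c₁ - w 0 * c₁') := by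
            rw [← ZMod.intCast_zmod_eq_zero_iff_dvd]
            push_cast at hcase ⊢
            linear_combination hcase
          obtain ⟨gmat, hdet, h10, hmv⟩ := build (-y) x (-y') x' 0 1 had had' (Or.inl rfl)
          refine ⟨gmat, hdet, ?_, hmv⟩
          rw [h10, hc, hc']
          have expand : v 0 * w 0 * (c₁' * x - c₁ * x')
              = -(v 0 * c₁ - w 0 * c₁') + (p:ℤ) * (c₁ * c₁' * (v 0 * y' - w 0 * y)) := by
            linear_combination (w 0 * c₁') * hxy - (v 0 * c₁) * hxy'
              - (w 0 * c₁' * y) * hc + (v 0 * c₁ * y') * hc'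
          have h2 : (p : ℤ) ∣ v 0 * w 0 * (c₁' * x - c₁ * x') := by
            rw [expand]
            exact dvd_add (dvd_neg.mpr hdvd) ⟨_, rfl⟩
          have key : (p : ℤ) ∣ (c₁' * x - c₁ * x') := by
            rcases hpI.dvd_mul.mp h2 with h' | h'
            · rcases hpI.dvd_mul.mp h' with h'' | h''
              · exact absurd h'' hpa
              · exact absurd h'' hpa'
            · exact h'
          obtain ⟨s, hs⟩ := key
          exact ⟨s, by linear_combination (p:ℤ) * hs⟩
        · -- minus case
          have hdvd : (p : ℤ) ∣ (v 0 * c₁ + w 0 * c₁') := by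
            rw [← ZMod.intCast_zmod_eq_zero_iff_dvd]
            push_cast at hcase ⊢
            linear_combination hcase
          obtain ⟨gmat, hdet, h10, hmv⟩ := build (-y) x (-y') x' 0 (-1) had had' (Or.inr rfl)
          refine ⟨gmat, hdet, ?_, hmv⟩
          rw [h10, hc, hc']
          have expand : v 0 * w 0 * (c₁' * x + c₁ * x')
              = (v 0 * c₁ + w 0 * c₁') - (p:ℤ) * (c₁ * c₁' * (w 0 * y + v 0 * y')) := by
            linear_combination (w 0 * c₁') * hxy + (v 0 * c₁) * hxy'
              - (w 0 * c₁' * y) * hc - (v 0 * c₁ * y') * hc'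
          have h2 : (p : ℤ) ∣ v 0 * w 0 * (c₁' * x + c₁ * x') := by
            rw [expand]
            exact dvd_sub hdvd ⟨_, rfl⟩
          have key : (p : ℤ) ∣ (c₁' * x + c₁ * x') := by
            rcases hpI.dvd_mul.mp h2 with h' | h'
            · rcases hpI.dvd_mul.mp h' with h'' | h''
              · exact absurd h'' hpa
              · exact absurd h'' hpa'
            · exact h'
          obtain ⟨s, hs⟩ := key
          exact ⟨s, by linear_combination (p:ℤ) * hs⟩
    · exfalso
      simp only [inv, if_pos hpc, if_neg hpc'] at h
      cases h
  · by_cases hpc' : (p : ℤ) ∣ w 1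
    · exfalso
      simp only [inv, if_neg hpc, if_pos hpc'] at h
      cases h
    · have hcop : IsCoprime (v 1 * w 1) ((p : ℤ) ^ 2) := by
        apply IsCoprime.mul_left
        · exact (hpI.coprime_iff_not_dvd.mpr hpc).symm.pow_right
        · exact (hpI.coprime_iff_not_dvd.mpr hpc').symm.pow_right
      obtain ⟨X, Y, hXY⟩ := hcop
      obtain ⟨gmat, hdet, h10, hmv⟩ :=
        build (-y) x (-y') x' (X * (w 1 * x - v 1 * x')) 1 had had' (Or.inl rfl)
      refine ⟨gmat, hdet, ?_, hmv⟩
      rw [h10]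
      exact ⟨(w 1 * x - v 1 * x') * Y, by linear_combination (-(w 1 * x - v 1 * x')) * hXY⟩

noncomputable def F (p : ℕ) (L : ProjLineQ) : Option (ZMod p) :=
  inv p (Classical.choose (exists_prim L))

lemma F_eq (p : ℕ) {L : ProjLineQ} {v : Fin 2 → ℤ} (hv : Prim v)
    (hL : L.1 = Submodule.span ℚ {cv v}) : F p L = inv p v := by
  obtain ⟨hv₀, hL₀⟩ := Classical.choose_spec (exists_prim L)
  have hspan : Submodule.span ℚ {cv (Classical.choose (exists_prim L))}
      = Submodule.span ℚ {cv v} := by rw [← hL₀, hL]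
  rcases prim_span_eq hv₀ hv hspan with h | h
  · rw [F, h]
  · rw [F, h]
    exact inv_neg p v

lemma map_line (g : Matrix (Fin 2) (Fin 2) ℤ) (v : Fin 2 → ℤ) :
    Submodule.map (Matrix.mulVecLin (g.map ((↑) : ℤ → ℚ))) (Submodule.span ℚ {cv v})
      = Submodule.span ℚ {cv (g.mulVec v)} := by
  rw [Submodule.map_span, Set.image_singleton, Matrix.mulVecLin_apply, cast_mulVec]

lemma F_rel (p : ℕ) (hp : p.Prime) {L L' : ProjLineQ}
    (h : relGamma0PM (p ^ 2) L L') : F p L = F p L' := by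
  obtain ⟨g, hdet, hdvd, hmap⟩ := h
  obtain ⟨v, hv, hLv⟩ := exists_prim L
  have hu : Prim (g.mulVec v) := hv.mulVec hdet
  have hL' : L'.1 = Submodule.span ℚ {cv (g.mulVec v)} := by
    rw [← hmap, hLv, map_line]
  rw [F_eq p hv hLv, F_eq p hu hL']
  exact (inv_mulVec hp hdet (by push_cast at hdvd ⊢; exact hdvd) hv).symm

lemma rel_of_F (p : ℕ) (hp : p.Prime) {L L' : ProjLineQ}
    (h : F p L = F p L') : relGamma0PM (p ^ 2) L L' := by
  obtain ⟨v, hv, hLv⟩ := exists_prim L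
  obtain ⟨w, hw, hLw⟩ := exists_prim L'
  rw [F_eq p hv hLv, F_eq p hw hLw] at h
  obtain ⟨g, hdet, hdvd, hmv⟩ := exists_g hp hv hw h
  refine ⟨g, hdet, by push_cast; exact hdvd, ?_⟩
  rw [hLv, map_line, hmv, hLw]

noncomputable def lineMk (v : Fin 2 → ℤ) (hv : Prim v) : ProjLineQ :=
  ⟨Submodule.span ℚ {cv v}, finrank_span_singleton (cv_ne_zero hv.ne_zero)⟩

lemma range_F (p : ℕ) (hp : p.Prime) : Set.range (F p) =
    insert none (insert (some 0)
      (Option.some '' (Set.range fun x : (ZMod p)ˣ => ((x : ZMod p) ^ 2)))) := by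
  haveI := Fact.mk hp
  have hpI : Prime (p : ℤ) := Nat.prime_iff_prime_int.mp hp
  ext o
  simp only [Set.mem_range, Set.mem_insert_iff, Set.mem_image]
  constructor
  · rintro ⟨L, rfl⟩
    obtain ⟨v, hv, hLv⟩ := exists_prim L
    rw [F_eq p hv hLv]
    by_cases hpc : (p : ℤ) ∣ v 1
    · rw [inv, if_pos hpc]
      by_cases hz : ((v 0 * (v 1 / p) : ℤ) : ZMod p) = 0
      · right; left; rw [hz]; ring_nf
      · right; right
        exact ⟨_, ⟨Units.mk0 _ hz, rfl⟩, rfl⟩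
    · left; rw [inv, if_neg hpc]
  · rintro (rfl | rfl | ⟨z, ⟨x, rfl⟩, rfl⟩)
    · -- none is attained by the line through (0, 1)
      have hprim : Prim ![0, 1] := by
        unfold Prim
        simp
        exact isCoprime_zero_left.mpr isUnit_one
      refine ⟨lineMk _ hprim, ?_⟩
      rw [F_eq p hprim rfl, inv]
      rw [if_neg ?_]
      show ¬ (p : ℤ) ∣ 1
      intro hd
      exact hpI.not_dvd_one hd
    · -- some 0 is attained by the line through (1, 0)
      have hprim : Prim ![1, 0] := by
        unfold Prim
        simp
        exact isCoprime_one_left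
      refine ⟨lineMk _ hprim, ?_⟩
      rw [F_eq p hprim rfl, inv]
      rw [if_pos ?_]
      · congr 1
        show (((1 : ℤ) * ((0 : ℤ) / p) : ℤ) : ZMod p) ^ 2 = 0
        norm_num
      · show (p : ℤ) ∣ 0
        exact dvd_zero _
    · -- some (x^2) is attained by the line through (x.val, p)
      have hpa : ¬ (p : ℤ) ∣ (((x : ZMod p).val : ℕ) : ℤ) := by
        rw [Int.natCast_dvd_natCast]
        intro hd
        have h0 : (((x : ZMod p).val : ℕ) : ZMod p) = 0 := by
          rw [ZMod.natCast_eq_zero_iff]; exact hd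
        rw [ZMod.natCast_rightInverse _] at h0
        exact x.ne_zero h0
      have hprim : Prim ![(((x : ZMod p).val : ℕ) : ℤ), (p : ℤ)] := by
        unfold Prim
        simp only [Matrix.cons_val_zero, Matrix.cons_val_one, Matrix.head_cons]
        exact (hpI.coprime_iff_not_dvd.mpr hpa).symm
      refine ⟨lineMk _ hprim, ?_⟩
      rw [F_eq p hprim rfl, inv]
      rw [if_pos ?_]
      · congr 1
        show ((((((x : ZMod p).val : ℕ) : ℤ)) * ((p : ℤ) / (p : ℤ)) : ℤ) : ZMod p) ^ 2
          = (x : ZMod p) ^ 2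
        rw [Int.ediv_self (by exact_mod_cast hp.ne_zero), mul_one]
        congr 1
        push_cast
        exact ZMod.natCast_rightInverse _
      · show (p : ℤ) ∣ (p : ℤ)
        exact dvd_rfl

lemma card_sq (p : ℕ) (hp : p.Prime) (hodd : p ≠ 2) :
    (Set.range fun x : (ZMod p)ˣ => ((x : ZMod p) ^ 2)).ncard = (p - 1) / 2 := by
  haveI := Fact.mk hp
  set φ : (ZMod p)ˣ →* (ZMod p)ˣ := powMonoidHom 2 with hφ
  have h1 : (Set.range fun x : (ZMod p)ˣ => ((x : ZMod p) ^ 2))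
      = (fun u : (ZMod p)ˣ => (u : ZMod p)) '' (Set.range φ) := by
    rw [← Set.range_comp]
    rfl
  rw [h1, Set.ncard_image_of_injective _ Units.val_injective]
  have h2 : Set.range φ = (φ.range : Set (ZMod p)ˣ) := (MonoidHom.coe_range φ).symm
  rw [h2, ← Nat.card_coe_set_eq]
  have hker : Nat.card φ.ker = 2 := by
    have hset : (φ.ker : Set (ZMod p)ˣ) = {1, -1} := by
      ext x
      simp only [SetLike.mem_coe, MonoidHom.mem_ker, Set.mem_insert_iff, Set.mem_singleton_iff]
      constructor
      · intro hx
        have hval : ((x : ZMod p)) ^ 2 = 1 := by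
          have := congrArg Units.val hx
          simpa [hφ, powMonoidHom] using this
        rcases sq_eq_one_iff.mp hval with h | h
        · left; exact Units.ext (by simpa using h)
        · right; exact Units.ext (by simpa using h)
      · rintro (rfl | rfl) <;> simp [hφ, powMonoidHom]
    have hne : (1 : (ZMod p)ˣ) ≠ -1 := by
      intro h
      have hval : (1 : ZMod p) = -1 := by
        have := congrArg (Units.val) h
        simpa using this
      have h2 : ((2 : ℕ) : ZMod p) = 0 := by push_cast; linear_combination hval
      rw [ZMod.natCast_eq_zero_iff] at h2
      exact hodd ((Nat.prime_dvd_prime_iff_eq hp Nat.prime_two).mp h2)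
    rw [show (Nat.card φ.ker) = Nat.card ((φ.ker : Set ((ZMod p)ˣ))) from rfl,
      Nat.card_coe_set_eq, hset, Set.ncard_pair hne]
  have hquot : Nat.card ((ZMod p)ˣ) = Nat.card φ.range * Nat.card φ.ker := by
    rw [← Nat.card_congr (QuotientGroup.quotientKerEquivRange φ).toEquiv]
    exact Subgroup.card_eq_card_quotient_mul_card_subgroup φ.ker
  have hunits : Nat.card ((ZMod p)ˣ) = p - 1 := by
    rw [Nat.card_eq_fintype_card, ZMod.card_units_eq_totient, Nat.totient_prime hp]
  have hrange : Nat.card ↥((φ.range : Set ((ZMod p)ˣ))) = Nat.card φ.range := rfl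
  rw [hrange]
  have hge : 3 ≤ p := by
    rcases hp.two_le.lt_or_eq with h | h
    · omega
    · omega
  rw [hker] at hquot
  omega

end Aux13

/-- **Statement 13.** For an odd prime `p`, the number of orbits of `Γ₀(p²)^±` on
`ℙ¹(ℚ)` equals `(p + 3) / 2`. -/
theorem stmt_13 (p : ℕ) (hp : p.Prime) (hodd : p ≠ 2) :
    Nat.card (Quot (relGamma0PM (p ^ 2))) = (p + 3) / 2 := by
  haveI := Fact.mk hp
  classical
  have hbij : Function.Bijective
      (Quot.lift (fun L => (⟨Aux13.F p L, Set.mem_range_self L⟩ : Set.range (Aux13.F p)))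
        (fun a b h => Subtype.ext (Aux13.F_rel p hp h))) := by
    constructor
    · intro q q'
      induction q using Quot.ind with | _ a =>
      induction q' using Quot.ind with | _ b =>
      intro h
      exact Quot.sound (Aux13.rel_of_F p hp (congrArg Subtype.val h))
    · rintro ⟨o, L, rfl⟩
      exact ⟨Quot.mk _ L, rfl⟩
  rw [Nat.card_eq_of_bijective _ hbij, Nat.card_coe_set_eq, Aux13.range_F p hp]
  have hnotmem1 : none ∉ insert (some (0 : ZMod p))
      (Option.some '' (Set.range fun x : (ZMod p)ˣ => ((x : ZMod p) ^ 2))) := by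
    simp
  have hnotmem2 : some (0 : ZMod p)
      ∉ Option.some '' (Set.range fun x : (ZMod p)ˣ => ((x : ZMod p) ^ 2)) := by
    rintro ⟨z, ⟨x, rfl⟩, hx⟩
    exact Units.ne_zero x ((pow_eq_zero_iff two_ne_zero).mp (Option.some.inj hx))
  rw [Set.ncard_insert_of_notMem hnotmem1, Set.ncard_insert_of_notMem hnotmem2,
    Set.ncard_image_of_injective _ (Option.some_injective _), Aux13.card_sq p hp hodd]
  have hodd' : p % 2 = 1 := Nat.odd_iff.mp (hp.odd_of_ne_two hodd)
  have hge : 3 ≤ p := by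
    rcases hp.two_le.lt_or_eq with h | h
    · omega
    · omega
  omega
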